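/- arXiv:2112.09317 — 6 statements merged into one kernel-verified Lean document; each statement's English description precedes it below -/
import Mathlib

section
/- Let G be a finite insoluble group in which every proper subgroup is soluble. Then G/Φ(G) is a nonabelian simple group. -/
open Subgroup

theorem stmt_1 (G : Type*) [Group G] [Finite G]
    (hG : ¬ IsSolvable G)
    (hprop : ∀ H : Subgroup G, H ≠ ⊤ → IsSolvable H) :
    IsSimpleGroup (G ⧸ frattini G) ∧ ∃ a b : G ⧸ frattini G, a * b ≠ b * a := by
  -- Key step: every proper normal subgroup of `G` lies in the Frattini subgroup.
  have key : ∀ K : Subgroup G, K.Normal → K ≠ ⊤ → K ≤ frattini G := by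
    intro K hKn hKt
    by_contra h
    rw [frattini, Order.radical, le_iInf₂_iff] at h
    push_neg at h
    obtain ⟨M, hM, hKM⟩ := h
    have hsup : K ⊔ M = ⊤ :=
      hM.2 _ (lt_of_le_of_ne le_sup_right (fun e => hKM (e ▸ le_sup_left)))
    haveI : Group.IsSolvable M := hprop M hM.1
    haveI : Group.IsSolvable K := hprop K hKt
    haveI : Group.IsSolvable (G ⧸ K) := by
      apply solvable_of_surjective (f := (QuotientGroup.mk' K).comp M.subtype)
      intro q
      obtain ⟨g, rfl⟩ := QuotientGroup.mk'_surjective K q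
      have hg : g ∈ K ⊔ M := hsup ▸ mem_top g
      rw [sup_comm, ← SetLike.mem_coe, Subgroup.mul_normal] at hg
      obtain ⟨m, hm, k, hk, rfl⟩ := hg
      refine ⟨⟨m, hm⟩, ?_⟩
      have hk1 : (k : G ⧸ K) = 1 := (QuotientGroup.eq_one_iff k).mpr hk
      simp only [MonoidHom.comp_apply, QuotientGroup.mk'_apply, Subgroup.coe_subtype,
        QuotientGroup.mk_mul, hk1, mul_one]
    exact hG (solvable_of_ker_le_range K.subtype (QuotientGroup.mk' K)
      (by rw [QuotientGroup.ker_mk', Subgroup.range_subtype]))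
  -- The Frattini subgroup is solvable (being nilpotent).
  haveI hfratsolv : Group.IsSolvable (frattini G) :=
    @IsNilpotent.to_isSolvable _ _ frattini_nilpotent
  -- The Frattini subgroup is proper.
  have hft : frattini G ≠ ⊤ := by
    intro h
    haveI : Group.IsSolvable ((⊤ : Subgroup G)) := h ▸ hfratsolv
    exact hG (solvable_of_surjective (f := (Subgroup.topEquiv (G := G)).toMonoidHom)
      Subgroup.topEquiv.surjective)
  -- The quotient is nontrivial.
  obtain ⟨g, hg⟩ : ∃ g, g ∉ frattini G := by
    by_contra hc
    push_neg at hc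
    exact hft ((Subgroup.eq_top_iff' _).mpr hc)
  haveI : Nontrivial (G ⧸ frattini G) :=
    ⟨⟨QuotientGroup.mk g, 1, by
      simpa [ne_eq, QuotientGroup.eq_one_iff] using hg⟩⟩
  constructor
  · constructor
    intro H hH
    set K := Subgroup.comap (QuotientGroup.mk' (frattini G)) H with hK
    have hHK : Subgroup.map (QuotientGroup.mk' (frattini G)) K = H :=
      Subgroup.map_comap_eq_self_of_surjective (QuotientGroup.mk'_surjective _) H
    by_cases hKt : K = ⊤
    · right
      rw [← hHK, hKt]
      exact Subgroup.map_top_of_surjective _ (QuotientGroup.mk'_surjective _)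
    · left
      have hKle : K ≤ frattini G := key K (hH.comap _) hKt
      rw [← hHK]
      exact (Subgroup.map_eq_bot_iff _).mpr (by rwa [QuotientGroup.ker_mk'])
  · by_contra h
    push_neg at h
    haveI : Group.IsSolvable (G ⧸ frattini G) := isSolvable_of_comm h
    exact hG (solvable_of_ker_le_range (frattini G).subtype
      (QuotientGroup.mk' (frattini G))
      (by rw [QuotientGroup.ker_mk', Subgroup.range_subtype]))
end

section
/- Let G be a finite insoluble group such that all proper subgroups of every maximal subgroup of G are soluble, and suppose G has no insoluble proper normal subgroup. If N is a maximal normal soluble subgroup of G with N ≠ G, then G/N is a nonabelian simple group. -/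
theorem stmt_6 (G : Type*) [Group G] [Finite G]
    (hG : ¬ IsSolvable G)
    (hyp : ∀ M : Subgroup G, IsCoatom M → ∀ H : Subgroup M, H ≠ ⊤ → IsSolvable H)
    (hnorm : ∀ K : Subgroup G, K.Normal → K ≠ ⊤ → IsSolvable K)
    (N : Subgroup G) [hN : N.Normal] (hNs : IsSolvable N) (hNne : N ≠ ⊤)
    (hNmax : ∀ K : Subgroup G, K.Normal → IsSolvable K → ¬ (N < K)) :
    IsSimpleGroup (G ⧸ N) ∧ ∃ a b : G ⧸ N, a * b ≠ b * a := by
  have hsurj := QuotientGroup.mk'_surjective N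
  have hnontriv : Nontrivial (G ⧸ N) := by
    have := (Subgroup.eq_top_iff' N).not.mp hNne
    push_neg at this
    rcases this with ⟨g, hg⟩
    exact ⟨QuotientGroup.mk g, 1, by
      simpa [QuotientGroup.eq_one_iff] using hg⟩
  have hsimple : IsSimpleGroup (G ⧸ N) := by
    refine ⟨fun H hH => ?_⟩
    let K := Subgroup.comap (QuotientGroup.mk' N) H
    have hKN : K.Normal := Subgroup.Normal.comap hH _
    by_cases hKtop : K = ⊤
    · right
      have hKtop' : Subgroup.comap (QuotientGroup.mk' N) H = ⊤ := hKtop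
      have := Subgroup.map_comap_eq_self_of_surjective hsurj (H := H)
      rw [← this, hKtop', Subgroup.map_top_of_surjective _ hsurj]
    · left
      have hKsolv : IsSolvable K := hnorm K hKN hKtop
      have hNK : N ≤ K := by
        intro x hx
        simp only [K, Subgroup.mem_comap]
        have : QuotientGroup.mk' N x = 1 := (QuotientGroup.eq_one_iff x).mpr hx
        rw [this]; exact H.one_mem
      have hKeq : K = N := by
        by_contra h
        exact hNmax K hKN hKsolv (lt_of_le_of_ne hNK (Ne.symm h))
      have := Subgroup.map_comap_eq_self_of_surjective hsurj (H := H)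
      rw [← this]
      have hKeq' : Subgroup.comap (QuotientGroup.mk' N) H = N := hKeq
      rw [hKeq']
      exact (Subgroup.map_eq_bot_iff N).mpr (QuotientGroup.ker_mk' N).ge
  refine ⟨hsimple, ?_⟩
  by_contra h
  push_neg at h
  have hcomm : ∀ a b : G ⧸ N, a * b = b * a := fun a b => h a b
  have hQsolv : IsSolvable (G ⧸ N) := isSolvable_of_comm hcomm
  exact hG (solvable_of_ker_le_range N.subtype (QuotientGroup.mk' N)
    (by rw [QuotientGroup.ker_mk', Subgroup.range_subtype]) (hG' := hNs) (hG'' := hQsolv))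
end

section
/- Let G be a finite group such that G/Φ(G) is a nonabelian simple group all of whose proper subgroups are soluble. Then every proper subgroup of every maximal subgroup of G is soluble. -/
theorem stmt_9 (G : Type*) [Group G] [Finite G]
    (hsimple : IsSimpleGroup (G ⧸ frattini G))
    (hnonab : ∃ a b : G ⧸ frattini G, a * b ≠ b * a)
    (hsol : ∀ H : Subgroup (G ⧸ frattini G), H ≠ ⊤ → IsSolvable H) :
    ∀ M : Subgroup G, IsCoatom M → ∀ H : Subgroup M, H ≠ ⊤ → IsSolvable H := by
  intro M hM H _
  have hφle : frattini G ≤ M := frattini_le_coatom hM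
  set π := QuotientGroup.mk' (frattini G) with hπ
  set φ : M →* G ⧸ frattini G := π.comp M.subtype with hφ
  have hmapeq : M.map π = φ.range := by
    ext x
    simp only [Subgroup.mem_map, MonoidHom.mem_range, hφ, MonoidHom.comp_apply]
    constructor
    · rintro ⟨y, hy, rfl⟩; exact ⟨⟨y, hy⟩, rfl⟩
    · rintro ⟨⟨y, hy⟩, rfl⟩; exact ⟨y, hy, rfl⟩
  have hrange : φ.range ≠ ⊤ := by
    intro htop
    apply hM.1
    have h2 : Subgroup.comap π (M.map π) = ⊤ := by
      rw [hmapeq, htop]; simp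
    rw [Subgroup.comap_map_eq, QuotientGroup.ker_mk', sup_eq_left.mpr hφle] at h2
    exact h2
  haveI : Group.IsSolvable φ.range := hsol _ hrange
  haveI : Group.IsNilpotent (frattini G) := frattini_nilpotent
  haveI : Group.IsSolvable (frattini G) := inferInstance
  haveI hker : Group.IsSolvable φ.ker := by
    have hmem : ∀ x : φ.ker, ((x : M) : G) ∈ frattini G := by
      intro x
      have hx : φ (x : M) = 1 := x.2
      exact (QuotientGroup.eq_one_iff _).mp hx
    let ψ : φ.ker →* frattini G :=
      ((M.subtype.comp φ.ker.subtype).codRestrict (frattini G) hmem)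
    have hinj : Function.Injective ψ := by
      intro a b hab
      have h1 : ((ψ a : G)) = ((ψ b : G)) := congrArg Subtype.val hab
      exact Subtype.ext (Subtype.ext h1)
    exact solvable_of_solvable_injective hinj
  haveI : Group.IsSolvable M := by
    refine solvable_of_ker_le_range φ.ker.subtype φ.rangeRestrict ?_
    intro x hx
    rw [Subgroup.range_subtype]
    simpa [MonoidHom.mem_ker] using hx
  exact (inferInstance : Group.IsSolvable H)
end

section
/- Let G be a finite group with a normal subgroup G₀ of prime index such that every proper subgroup of G₀ is soluble. Then every proper subgroup of every maximal subgroup of G is soluble. -/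
open Subgroup

theorem stmt_10 (G : Type*) [Group G] [Finite G]
    (G₀ : Subgroup G) [hG₀ : G₀.Normal] (hidx : G₀.index.Prime)
    (hsol : ∀ H : Subgroup G₀, H ≠ ⊤ → IsSolvable H) :
    ∀ M : Subgroup G, IsCoatom M → ∀ H : Subgroup M, H ≠ ⊤ → IsSolvable H := by
  -- any subgroup containing G₀ is G₀ or ⊤
  have hcont : ∀ K : Subgroup G, G₀ ≤ K → K = G₀ ∨ K = ⊤ := by
    intro K hK
    have h := Subgroup.relIndex_mul_index hK
    rcases (Nat.Prime.eq_one_or_self_of_dvd hidx K.index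
      (Dvd.intro_left _ h)) with h1 | h1
    · right; exact Subgroup.index_eq_one.mp h1
    · left
      rw [h1] at h
      have hpos : G₀.index ≠ 0 := hidx.ne_zero
      have : G₀.relIndex K = 1 := by
        by_contra hr
        have h2 : 2 ≤ G₀.relIndex K := by
          rcases Nat.eq_zero_or_pos (G₀.relIndex K) with h0 | h0
          · rw [h0, zero_mul] at h; exact absurd h.symm hpos
          · omega
        have := Nat.mul_le_mul_right G₀.index h2
        rw [h] at this
        omega
      exact le_antisymm (Subgroup.relIndex_eq_one.mp this) hK
  -- the quotient G ⧸ G₀ is solvable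
  haveI : Fact (G₀.index.Prime) := ⟨hidx⟩
  have hcard : Nat.card (G ⧸ G₀) = G₀.index := rfl
  haveI : IsCyclic (G ⧸ G₀) := isCyclic_of_prime_card hcard
  haveI hQsolv : Group.IsSolvable (G ⧸ G₀) := by
    letI := IsCyclic.commGroup (α := G ⧸ G₀)
    infer_instance
  -- any subgroup of G other than ⊤ and G₀ is solvable
  have aux : ∀ K : Subgroup G, K ≠ ⊤ → K ≠ G₀ → Group.IsSolvable K := by
    intro K hKtop hKG₀
    have hnle : ¬ G₀ ≤ K := by
      intro h
      rcases hcont K h with h | h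
      · exact hKG₀ h
      · exact hKtop h
    -- K ⊓ G₀, viewed inside G₀, is proper, hence solvable
    have h1 : K.subgroupOf G₀ ≠ ⊤ := by
      intro h
      exact hnle (Subgroup.subgroupOf_eq_top.mp h)
    haveI hsolK : Group.IsSolvable (K.subgroupOf G₀) := hsol _ h1
    -- transfer solvability to G₀.subgroupOf K
    haveI hsolN : Group.IsSolvable (G₀.subgroupOf K) := by
      have e1 : (G₀ ⊓ K).subgroupOf K ≃* ↥(G₀ ⊓ K) :=
        Subgroup.subgroupOfEquivOfLe inf_le_right
      have e2 : (G₀ ⊓ K).subgroupOf G₀ ≃* ↥(G₀ ⊓ K) :=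
        Subgroup.subgroupOfEquivOfLe inf_le_left
      have hne : (G₀ ⊓ K).subgroupOf G₀ = K.subgroupOf G₀ := by
        rw [Subgroup.inf_subgroupOf_left]
      have hne' : (G₀ ⊓ K).subgroupOf K = G₀.subgroupOf K := by
        rw [Subgroup.inf_subgroupOf_right]
      haveI : Group.IsSolvable ((G₀ ⊓ K).subgroupOf G₀) := hne ▸ hsolK
      haveI : Group.IsSolvable ↥(G₀ ⊓ K) :=
        solvable_of_solvable_injective (f := e2.symm.toMonoidHom) e2.symm.injective
      haveI : Group.IsSolvable ((G₀ ⊓ K).subgroupOf K) :=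
        solvable_of_solvable_injective (f := e1.toMonoidHom) e1.injective
      exact hne' ▸ this
    -- K is an extension of a subgroup of the quotient by G₀.subgroupOf K
    refine solvable_of_ker_le_range (G₀.subgroupOf K).subtype
      ((QuotientGroup.mk' G₀).comp K.subtype) ?_
    intro x hx
    rw [Subgroup.range_subtype]
    have : x ∈ G₀.subgroupOf K := by
      rwa [MonoidHom.mem_ker, MonoidHom.comp_apply,
        ← MonoidHom.mem_ker, QuotientGroup.ker_mk'] at hx
    exact this
  -- finish
  intro M hM H hH
  set K : Subgroup G := H.map M.subtype with hK
  have hKle : K ≤ M := by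
    rw [hK]
    simpa using Subgroup.map_subtype_le H
  have hMtop : M ≠ ⊤ := hM.1
  have hKtop : K ≠ ⊤ := by
    intro h
    exact hMtop (top_le_iff.mp (h ▸ hKle))
  have hKG₀ : K ≠ G₀ := by
    intro h
    have hG₀M : G₀ ≤ M := h ▸ hKle
    rcases hcont M hG₀M with h2 | h2
    · -- M = G₀, so K = M, contradicting H ≠ ⊤
      apply hH
      have hinj := Subgroup.map_injective (Subgroup.subtype_injective M)
      apply hinj
      rw [← hK, h, ← h2]
      rw [← MonoidHom.range_eq_map, Subgroup.range_subtype]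
    · exact hMtop h2
  haveI := aux K hKtop hKG₀
  exact solvable_of_solvable_injective
    (f := (Subgroup.equivMapOfInjective H M.subtype (Subgroup.subtype_injective M)).toMonoidHom)
    (Subgroup.equivMapOfInjective H M.subtype (Subgroup.subtype_injective M)).injective
end

section
/- Let G be a finite group such that every proper subgroup of every maximal subgroup of G is soluble. Then G has at most one insoluble composition factor. -/
private lemma stmt_16_aux (G : Type*) [Group G] [Finite G]
    (hyp : ∀ M : Subgroup G, IsCoatom M → ∀ H : Subgroup M, H ≠ ⊤ → IsSolvable H)
    (n : ℕ) (H : Fin (n + 1) → Subgroup G)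
    (hmono : Monotone H)
    (hnormal : ∀ i : Fin n, ((H i.castSucc).subgroupOf (H i.succ)).Normal)
    (i j : Fin n) (hij : i < j)
    (hi : haveI := hnormal i; ¬ IsSolvable (H i.succ ⧸ (H i.castSucc).subgroupOf (H i.succ)))
    (hj : haveI := hnormal j; ¬ IsSolvable (H j.succ ⧸ (H j.castSucc).subgroupOf (H j.succ))) :
    False := by
  haveI := hnormal i
  haveI := hnormal j
  -- H i.succ is insoluble
  have hKi1 : ¬ IsSolvable (H i.succ) := by
    intro h
    exact hi (haveI : Group.IsSolvable (H i.succ) := h; inferInstanceAs (Group.IsSolvable _))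
  -- H j.succ is not contained in H j.castSucc
  have hne : ¬ H j.succ ≤ H j.castSucc := by
    intro h
    apply hj
    have htop : (H j.castSucc).subgroupOf (H j.succ) = ⊤ :=
      Subgroup.subgroupOf_eq_top.2 h
    haveI : Subsingleton ((H j.succ) ⧸ (H j.castSucc).subgroupOf (H j.succ)) := by
      constructor
      intro a b
      induction a using QuotientGroup.induction_on
      induction b using QuotientGroup.induction_on
      rw [QuotientGroup.eq, htop]
      exact Subgroup.mem_top _
    exact inferInstanceAs (Group.IsSolvable _)
  have hKjne : H j.castSucc ≠ ⊤ := by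
    intro h
    exact hne (h ▸ le_top)
  -- find a maximal subgroup M containing H j.castSucc
  obtain h | ⟨M, hM, hKjM⟩ := eq_top_or_exists_le_coatom (H j.castSucc)
  · exact hKjne h
  -- H i.succ ≤ H j.castSucc
  have hle1 : H i.succ ≤ H j.castSucc := by
    apply hmono
    have h1 : (i : ℕ) < j := hij
    simp only [Fin.le_def, Fin.val_succ, Fin.coe_castSucc]
    omega
  have hle2 : H i.succ ≤ M := hle1.trans hKjM
  -- (H i.succ).subgroupOf M = ⊤, else H i.succ would be solvable
  have htop : (H i.succ).subgroupOf M = ⊤ := by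
    by_contra hne'
    have : Group.IsSolvable _ := hyp M hM _ hne'
    exact hKi1 (solvable_of_solvable_injective
      (f := (Subgroup.subgroupOfEquivOfLe hle2).symm.toMonoidHom)
      (Subgroup.subgroupOfEquivOfLe hle2).symm.injective)
  have hMle : M ≤ H i.succ := Subgroup.subgroupOf_eq_top.1 htop
  -- hence M = H j.castSucc
  have hMeq : M = H j.castSucc := le_antisymm (hMle.trans hle1) hKjM
  have hcoatom : IsCoatom (H j.castSucc) := hMeq ▸ hM
  -- H j.succ = ⊤
  have hKj1top : H j.succ = ⊤ :=
    hcoatom.2 _ (lt_of_le_of_ne (hmono (Fin.castSucc_le_succ j)) (fun h => hne h.ge))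
  -- Now show the j-th factor is cyclic, hence solvable: contradiction
  apply hj
  set N := (H j.castSucc).subgroupOf (H j.succ) with hN
  -- every subgroup of the quotient is ⊥ or ⊤
  have key : ∀ S : Subgroup ((H j.succ) ⧸ N), S = ⊥ ∨ S = ⊤ := by
    intro S
    set T := (S.comap (QuotientGroup.mk' N)).map (H j.succ).subtype with hT
    have hNle : N ≤ S.comap (QuotientGroup.mk' N) := by
      intro x hx
      have : (QuotientGroup.mk' N) x = 1 := by
        rw [← MonoidHom.mem_ker, QuotientGroup.ker_mk']
        exact hx
      simp only [Subgroup.mem_comap, this]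
      exact S.one_mem
    have hKjT : H j.castSucc ≤ T := by
      intro x hx
      have hx1 : x ∈ H j.succ := hmono (Fin.castSucc_le_succ j) hx
      exact ⟨⟨x, hx1⟩, hNle hx, rfl⟩
    rcases hKjT.eq_or_lt with heq | hlt
    · left
      have hcm : S.comap (QuotientGroup.mk' N) = N := by
        apply Subgroup.map_injective (H j.succ).subtype_injective
        rw [← hT, ← heq, hN, Subgroup.subgroupOf_map_subtype]
        exact (inf_eq_left.2 (hmono (Fin.castSucc_le_succ j))).symm
      rw [← Subgroup.map_comap_eq_self_of_surjective
        (QuotientGroup.mk'_surjective N) S, hcm]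
      rw [Subgroup.eq_bot_iff_forall]
      rintro x ⟨y, hy, rfl⟩
      rw [← MonoidHom.mem_ker, QuotientGroup.ker_mk']
      exact hy
    · right
      have hTtop : T = ⊤ := by
        rw [← hKj1top]
        exact le_antisymm (hKj1top ▸ le_top) (by
          have := hcoatom.2 T hlt
          rw [this]
          exact le_top)
      have hTle : T ≤ H j.succ := Subgroup.map_subtype_le _
      have hcm : S.comap (QuotientGroup.mk' N) = ⊤ := by
        apply Subgroup.map_injective (H j.succ).subtype_injective
        rw [← hT, hTtop]
        have : ((⊤ : Subgroup (H j.succ)).map (H j.succ).subtype) = H j.succ := by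
          rw [← MonoidHom.range_eq_map, Subgroup.range_subtype]
        rw [this, hKj1top]
      exact Subgroup.comap_injective (QuotientGroup.mk'_surjective N)
        (by rw [hcm, Subgroup.comap_top])
  -- cyclic hence solvable
  rcases subsingleton_or_nontrivial ((H j.succ) ⧸ N) with hs | hnt
  · exact inferInstanceAs (Group.IsSolvable _)
  · obtain ⟨g, hg⟩ := exists_ne (1 : (H j.succ) ⧸ N)
    have hzp : Subgroup.zpowers g = ⊤ := by
      rcases key (Subgroup.zpowers g) with h | h
      · exact absurd (by simpa [Subgroup.zpowers_eq_bot] using h) hg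
      · exact h
    haveI : IsCyclic ((H j.succ) ⧸ N) :=
      ⟨⟨g, fun x => by show x ∈ Subgroup.zpowers g; rw [hzp]; exact Subgroup.mem_top x⟩⟩
    exact isSolvable_of_comm fun a b => IsCyclic.commGroup.mul_comm a b

theorem stmt_16 (G : Type*) [Group G] [Finite G]
    (hyp : ∀ M : Subgroup G, IsCoatom M → ∀ H : Subgroup M, H ≠ ⊤ → IsSolvable H)
    (n : ℕ) (H : Fin (n + 1) → Subgroup G)
    (hmono : Monotone H) (h0 : H 0 = ⊥) (hn : H (Fin.last n) = ⊤)
    (hnormal : ∀ i : Fin n, ((H i.castSucc).subgroupOf (H i.succ)).Normal)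
    (hsimple : ∀ i : Fin n,
      haveI := hnormal i; IsSimpleGroup (H i.succ ⧸ (H i.castSucc).subgroupOf (H i.succ))) :
    ∀ i j : Fin n,
      (haveI := hnormal i; ¬ IsSolvable (H i.succ ⧸ (H i.castSucc).subgroupOf (H i.succ))) →
      (haveI := hnormal j; ¬ IsSolvable (H j.succ ⧸ (H j.castSucc).subgroupOf (H j.succ))) →
      i = j := by
  intro i j hi hj
  rcases lt_trichotomy i j with h | h | h
  · exact absurd (stmt_16_aux G hyp n H hmono hnormal i j h hi hj) not_false
  · exact h
  · exact absurd (stmt_16_aux G hyp n H hmono hnormal j i h hj hi) not_false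
end

section
/- Let G be a finite group, N ⊴ G soluble, and suppose every maximal subgroup of G contains N. If G/N is a nonabelian simple group all of whose proper subgroups are soluble, then every proper subgroup of G is soluble. -/
theorem stmt_17 (G : Type*) [Group G] [Finite G]
    (N : Subgroup G) [hN : N.Normal] (hNs : IsSolvable N)
    (hle : ∀ M : Subgroup G, IsCoatom M → N ≤ M)
    (hsimple : IsSimpleGroup (G ⧸ N))
    (hnonab : ∃ a b : G ⧸ N, a * b ≠ b * a)
    (hsol : ∀ H : Subgroup (G ⧸ N), H ≠ ⊤ → IsSolvable H) :
    ∀ H : Subgroup G, H ≠ ⊤ → IsSolvable H := by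
  intro H hH
  set g : H →* G ⧸ N := (QuotientGroup.mk' N).comp H.subtype with hg
  by_cases h2 : g.range = ⊤
  · -- then H ⊔ N = ⊤, contradiction with N ≤ Φ(G)
    exfalso
    obtain ⟨M, hM, hHM⟩ := (Finite.to_isCoatomic (α := Subgroup G)).eq_top_or_exists_le_coatom H |>.resolve_left hH
    apply hM.1
    rw [eq_top_iff]
    intro x _
    have : (QuotientGroup.mk' N) x ∈ g.range := h2 ▸ Subgroup.mem_top _
    obtain ⟨⟨h, hh⟩, hhx⟩ := this
    have hn : h⁻¹ * x ∈ N := by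
      have h3 : ((h : G ⧸ N)) = (x : G ⧸ N) := hhx
      exact QuotientGroup.eq.mp h3
    have : x = h * (h⁻¹ * x) := by group
    rw [this]
    exact M.mul_mem (hHM hh) (hle M hM hn)
  · -- kernel of g is N ∩ H, solvable; range solvable
    have hker : IsSolvable g.ker := by
      set f : g.ker →* N := MonoidHom.codRestrict ((H.subtype).comp g.ker.subtype) N
        (fun x => by
          have hx := x.2
          rw [MonoidHom.mem_ker] at hx
          exact (QuotientGroup.eq_one_iff _).mp hx)
      have hinj : Function.Injective f := by
        intro a b hab
        have h4 : (f a : G) = (f b : G) := congrArg Subtype.val hab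
        ext
        exact h4
      exact (haveI : Group.IsSolvable N := hNs; solvable_of_solvable_injective hinj)
    have hrange : IsSolvable g.range := hsol _ h2
    haveI : Group.IsSolvable g.ker := hker
    haveI : Group.IsSolvable g.range := hrange
    exact solvable_of_ker_le_range g.ker.subtype g.rangeRestrict
      (by rw [MonoidHom.ker_rangeRestrict]; exact fun x hx => ⟨⟨x, hx⟩, rfl⟩)
end
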